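/- For all integers s ≥ 0: p_{2s+1,1}(q) = q^{s(s+1)/2} in ℤ[q]. Equivalently, the generating series P₁(q,u) = Σ_{s≥0} p_{2s+1,1}(q)u^{s+1} equals uΘ(q²,qu²) + qu²Θ(q²,q³u²), where Θ(q,u) = Σ_{s≥0} q^{s²}u^s is the partial theta series. -/

import Mathlib

open scoped PowerSeries

/-- The polynomials `p_{s,r}(q) ∈ ℤ[q]` (the graded multiplicities
`[D(2,sω) : D(3,rω)]_q`): `p_{0,0} = p_{1,1} = p_{2,2} = 1`; `p_{s,r} = 0` whenever
`r > s`, or `s - r` is odd, or `s ≤ 2` and `(s,r) ∉ {(0,0),(1,1),(2,2)}`; and for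
`s ≥ 3` with `r ≤ s` and `s - r` even, writing `s = 2s₁ + s₀` with `s₀ ∈ {0,1}`,
`p_{s,r} = q^{(s-r)/2} p_{s-3,r-3} + q^{(s₁+s₀-1)(2-s₀)} p_{s-4+2s₀,r}` if `r ≥ 3`, and
`p_{s,r} = q^{(s₁+s₀-1)(2-s₀)} p_{s-4+2s₀,r}` if `0 ≤ r ≤ 2`. -/
noncomputable def pp : ℕ → ℕ → Polynomial ℤ
  | 0, r => if r = 0 then 1 else 0
  | 1, r => if r = 1 then 1 else 0
  | 2, r => if r = 2 then 1 else 0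
  | (s + 3), r =>
    if (s + 3) < r ∨ (s + 3) % 2 ≠ r % 2 then 0
    else
      (if 3 ≤ r then Polynomial.X ^ (((s + 3) - r) / 2) * pp s (r - 3) else 0)
        + Polynomial.X ^ (((s + 3) / 2 + (s + 3) % 2 - 1) * (2 - (s + 3) % 2))
            * pp ((s + 3) + 2 * ((s + 3) % 2) - 4) r
  termination_by s _ => s
  decreasing_by
  · omega
  · omega

/-- The generating series `P_m(q,u)`: for `m` even, `P_m(q,u) = Σ_{s≥0} p_{2s,m} u^s`;
for `m` odd, `P_m(q,u) = Σ_{s≥0} p_{2s+1,m} u^{s+1}`.  A formal power series in `u` with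
coefficients in `ℤ[q]`. -/
noncomputable def Pser (m : ℕ) : PowerSeries (Polynomial ℤ) :=
  PowerSeries.mk fun n =>
    if m % 2 = 0 then pp (2 * n) m else if n = 0 then 0 else pp (2 * n - 1) m

/-- `thetaSubst a c` is the substituted partial theta series `Θ(a, c·u²) ∈ ℤ[q]⟦u⟧`,
i.e. `Σ_{s≥0} a^{s²} c^s u^{2s}`, where `Θ(q,u) = Σ_{s≥0} q^{s²}u^s`. -/
noncomputable def thetaSubst (a c : Polynomial ℤ) : PowerSeries (Polynomial ℤ) :=
  PowerSeries.mk fun n => if n % 2 = 0 then a ^ ((n / 2) ^ 2) * c ^ (n / 2) else 0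

/-- For all integers `s ≥ 0`: `p_{2s+1,1}(q) = q^{s(s+1)/2}` in `ℤ[q]`.
Equivalently, the generating series `P₁(q,u) = Σ_{s≥0} p_{2s+1,1}(q)u^{s+1}` equals
`u·Θ(q², qu²) + qu²·Θ(q², q³u²)`, where `Θ(q,u) = Σ_{s≥0} q^{s²}u^s` is the partial
theta series. -/

private lemma pp_rec (s : ℕ) : pp (2*s+3) 1 = Polynomial.X ^ (s+1) * pp (2*s+1) 1 := by
  have h : 2*s+3 = (2*s)+3 := by ring
  rw [h, pp]
  norm_num
  have h1 : (2*s+3) % 2 = 1 := by omega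
  have h2 : (2*s+3) / 2 = s+1 := by omega
  rw [h2, show 2*s+3+2-4 = 2*s+1 by omega]

private lemma pp_odd (s : ℕ) : pp (2 * s + 1) 1 = Polynomial.X ^ (s * (s + 1) / 2) := by
  induction s with
  | zero => simp [pp]
  | succ n ih =>
    have h : 2 * (n+1) + 1 = 2*n+3 := by ring
    rw [h, pp_rec, ih, ← pow_add]
    congr 1
    obtain ⟨k, hk⟩ := Nat.even_mul_succ_self n
    have h2 : (n+1) * (n+1+1) = n*(n+1) + 2*(n+1) := by ring
    omega

private lemma coeffRHS (n : ℕ) :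
    (PowerSeries.coeff n) (PowerSeries.X * thetaSubst (Polynomial.X ^ 2) Polynomial.X
      + PowerSeries.C (R := Polynomial ℤ) Polynomial.X * PowerSeries.X ^ 2
          * thetaSubst (Polynomial.X ^ 2) (Polynomial.X ^ 3)) =
    (if 1 ≤ n then (if (n-1) % 2 = 0 then (Polynomial.X:Polynomial ℤ) ^ (2*((n-1)/2)^2) * Polynomial.X ^ ((n-1)/2) else 0) else 0)
    + (if 2 ≤ n then Polynomial.X * (if (n-2) % 2 = 0 then (Polynomial.X:Polynomial ℤ) ^ (2*((n-2)/2)^2) * Polynomial.X ^ (3*((n-2)/2)) else 0) else 0) := by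
  rw [show (PowerSeries.X : (Polynomial ℤ)⟦X⟧) = PowerSeries.X ^ 1 from (pow_one _).symm,
    mul_assoc, map_add, PowerSeries.coeff_X_pow_mul', PowerSeries.coeff_C_mul,
    show ((PowerSeries.X:(Polynomial ℤ)⟦X⟧)^1)^2 = PowerSeries.X^2 by ring,
    PowerSeries.coeff_X_pow_mul']
  simp only [thetaSubst, PowerSeries.coeff_mk, ← pow_mul, mul_ite, mul_zero]

private lemma eKey (m : ℕ) :
    (if 1 ≤ m+1 then (if (m+1-1) % 2 = 0 then (Polynomial.X:Polynomial ℤ) ^ (2*((m+1-1)/2)^2) * Polynomial.X ^ ((m+1-1)/2) else 0) else 0)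
    + (if 2 ≤ m+1 then Polynomial.X * (if (m+1-2) % 2 = 0 then (Polynomial.X:Polynomial ℤ) ^ (2*((m+1-2)/2)^2) * Polynomial.X ^ (3*((m+1-2)/2)) else 0) else 0)
    = Polynomial.X ^ (m * (m+1) / 2) := by
  rcases Nat.even_or_odd m with ⟨k,hk⟩|⟨k,hk⟩ <;> subst hk
  · have h1 : (k+k+1-1) % 2 = 0 := by omega
    have h2 : (k+k+1-1)/2 = k := by omega
    rw [if_pos (by omega), if_pos h1, h2]
    have : (if 2 ≤ k+k+1 then Polynomial.X * (if (k+k+1-2) % 2 = 0 then (Polynomial.X:Polynomial ℤ) ^ (2*((k+k+1-2)/2)^2) * Polynomial.X ^ (3*((k+k+1-2)/2)) else 0) else 0) = 0 := by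
      split_ifs with ha hb
      · exfalso; omega
      · simp
      · rfl
    rw [this, add_zero, ← pow_add]
    congr 1
    have : (k+k) * (k+k+1) = 2 * (2*k^2 + k) := by ring
    omega
  · have h1 : (2*k+1+1-1) % 2 = 1 := by omega
    rw [if_pos (by omega), if_neg (by omega), if_pos (by omega),
      if_pos (show (2*k+1+1-2) % 2 = 0 by omega), show (2*k+1+1-2)/2 = k by omega,
      zero_add, ← pow_add, ← pow_succ']
    congr 1
    have : (2*k+1) * (2*k+1+1) = 2 * (2*k^2 + 3*k + 1) := by ring
    omega

theorem stmt11 :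
    (∀ s : ℕ, pp (2 * s + 1) 1 = Polynomial.X ^ (s * (s + 1) / 2)) ∧
    Pser 1 = PowerSeries.X * thetaSubst (Polynomial.X ^ 2) Polynomial.X
      + PowerSeries.C (R := Polynomial ℤ) Polynomial.X * PowerSeries.X ^ 2
          * thetaSubst (Polynomial.X ^ 2) (Polynomial.X ^ 3) := by
  refine ⟨pp_odd, ?_⟩
  refine PowerSeries.ext fun n => ?_
  rw [coeffRHS]
  simp only [Pser, PowerSeries.coeff_mk]
  rw [if_neg (by norm_num)]
  rcases n with _ | m
  · simp
  · rw [if_neg (by omega), show 2*(m+1)-1 = 2*m+1 by omega, pp_odd, eKey]
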